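/- Let α satisfy φ < α ≤ 2, where φ = (1 + √5)/2 is the golden ratio, and let A, B, a, b be positive integers such that (α − 1)·B ≤ A. Then A·c_α·log₂ a + B·(1 + c_α·log₂ b) + A + B ≤ (A + B)·(1 + c_α·log₂(a + b)). -/

import Mathlib

open Real

set_option maxHeartbeats 1000000

/-- The constant `c_α = (α+1)/((α+1)·log₂(α+1) − α·log₂ α)`. -/
noncomputable def cA (α : ℝ) : ℝ :=
  (α + 1) / ((α + 1) * logb 2 (α + 1) - α * logb 2 α)

/-- Lemma 6 (for case (B)): for `φ < α ≤ 2`, if `(α−1)B ≤ A` then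
`A·c_α·log a + B·(1 + c_α·log b) + A + B ≤ (A+B)·(1 + c_α·log(a+b))`. -/
theorem alphamerge_B (α : ℝ) (hφ : (1 + Real.sqrt 5) / 2 < α) (hα2 : α ≤ 2)
    (A B a b : ℕ) (hA : 0 < A) (hB : 0 < B) (ha : 0 < a) (hb : 0 < b)
    (h1 : (α - 1) * B ≤ (A : ℝ)) :
    (A : ℝ) * cA α * logb 2 a + (B : ℝ) * (1 + cA α * logb 2 b) + A + B
      ≤ ((A : ℝ) + B) * (1 + cA α * logb 2 ((a : ℝ) + b)) := by
  have h5 : (2.236 : ℝ) < Real.sqrt 5 := (Real.lt_sqrt (by norm_num)).mpr (by norm_num)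
  have hα : (1.618 : ℝ) < α := by linarith
  have hα0 : (0 : ℝ) < α := by linarith
  have hα1 : (1 : ℝ) < α := by linarith
  have hαm : (0 : ℝ) < α - 1 := by linarith
  have hl2 : (0 : ℝ) < Real.log 2 := Real.log_pos (by norm_num)
  have hla : 0 < Real.log α := Real.log_pos hα1
  have hlm : Real.log (α - 1) ≤ 0 := Real.log_nonpos (by linarith) (by linarith)
  have hlpla : Real.log α < Real.log (α + 1) := Real.log_lt_log hα0 (by linarith)
  -- abbreviations (as plain terms)
  -- M = α log α - (α-1) log (α-1) ; D = (α+1) log (α+1) - α log α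
  have hM : 0 < α * Real.log α - (α - 1) * Real.log (α - 1) := by
    nlinarith [mul_pos hα0 hla, mul_nonneg hαm.le (neg_nonneg.mpr hlm)]
  have hD : 0 < (α + 1) * Real.log (α + 1) - α * Real.log α := by nlinarith
  -- bounds on log(3/2)
  have hl32eq : Real.log (3 / 2) = Real.log 3 - Real.log 2 :=
    Real.log_div (by norm_num) (by norm_num)
  have hl32low : (0.4 : ℝ) ≤ Real.log (3 / 2) := by
    have h98 : (1 / 9 : ℝ) ≤ Real.log (9 / 8) := by
      have h := Real.log_le_sub_one_of_pos (show (0:ℝ) < 8 / 9 by norm_num)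
      have h2 : Real.log ((8:ℝ) / 9) = -Real.log (9 / 8) := by
        rw [show ((8:ℝ)/9) = ((9:ℝ)/8)⁻¹ by norm_num, Real.log_inv]
      rw [h2] at h
      linarith
    have hsq : 2 * Real.log (3 / 2) = Real.log 2 + Real.log (9 / 8) := by
      have h1 : Real.log (((3:ℝ) / 2) ^ 2) = 2 * Real.log (3 / 2) := by
        rw [Real.log_pow]; push_cast; ring
      have h2 : ((3:ℝ) / 2) ^ 2 = 2 * (9 / 8) := by norm_num
      rw [h2, Real.log_mul (by norm_num) (by norm_num)] at h1
      linarith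
    linarith [Real.log_two_gt_d9]
  -- f2c : 0 ≤ 3 - 2α - 2α (log(3/2) - log α)
  have f2c : 0 ≤ 3 - 2 * α - 2 * α * (Real.log (3 / 2) - Real.log α) := by
    have hx : (0:ℝ) < 3 / (2 * α) := by positivity
    have h := Real.log_le_sub_one_of_pos hx
    have hlog : Real.log (3 / (2 * α)) = Real.log (3 / 2) - Real.log α := by
      rw [show (3:ℝ) / (2 * α) = 3 / 2 / α by ring,
        Real.log_div (by norm_num) (ne_of_gt hα0)]
    rw [hlog] at h
    have h2 := mul_le_mul_of_nonneg_left h (by positivity : (0:ℝ) ≤ 2 * α)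
    have h3 : 2 * α * (3 / (2 * α) - 1) = 3 - 2 * α := by field_simp
    linarith
  -- f3c : 0 ≤ (2 - α) - 3α (log(α+1) - log α - log(3/2))
  have f3c : 0 ≤ (2 - α) - 3 * α * (Real.log (α + 1) - Real.log α - Real.log (3 / 2)) := by
    have hx : (0:ℝ) < 2 * (α + 1) / (3 * α) := by positivity
    have h := Real.log_le_sub_one_of_pos hx
    have hlog : Real.log (2 * (α + 1) / (3 * α))
        = Real.log (α + 1) - Real.log α - Real.log (3 / 2) := by
      rw [Real.log_div (by positivity) (by positivity),
        Real.log_mul (by norm_num) (by positivity),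
        Real.log_mul (by norm_num) (ne_of_gt hα0), hl32eq]
      ring
    rw [hlog] at h
    have h2 := mul_le_mul_of_nonneg_left h (by positivity : (0:ℝ) ≤ 3 * α)
    have h3 : 3 * α * (2 * (α + 1) / (3 * α) - 1) = 2 - α := by field_simp; ring
    linarith
  -- the analytic core: D ≤ (α+1) M
  have hstar : (α + 1) * Real.log (α + 1) - α * Real.log α
      ≤ (α + 1) * (α * Real.log α - (α - 1) * Real.log (α - 1)) := by
    have c1 : 0 ≤ (α + 1) *
        ((2 - α) - 3 * α * (Real.log (α + 1) - Real.log α - Real.log (3 / 2))) :=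
      mul_nonneg (by linarith) f3c
    have c2 : 0 ≤ (3 / 2 * (α ^ 2 + α - 1)) *
        (3 - 2 * α - 2 * α * (Real.log (3 / 2) - Real.log α)) :=
      mul_nonneg (by nlinarith [mul_pos hα0 hα0, hα1]) f2c
    have c3 : 0 ≤ 3 * α * (α ^ 2 - 1) * (-Real.log (α - 1)) :=
      mul_nonneg (by nlinarith [mul_pos hα0 hα0, hα1]) (by linarith)
    have c4 : 0 ≤ 3 * α * (α ^ 2 - 2) * (Real.log (3 / 2) - 0.4) :=
      mul_nonneg (by nlinarith [mul_pos hα0 hα0, hα]) (by linarith)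
    have hR : 0 ≤ 4.2 * α ^ 3 - 0.5 * α ^ 2 - 10.9 * α + 2.5 := by
      nlinarith [sq_nonneg (α - 1.618), mul_nonneg (mul_nonneg (by linarith : (0:ℝ) ≤ α - 1.618) (by linarith : (0:ℝ) ≤ α - 1.618)) (by linarith : (0:ℝ) ≤ α - 1.618)]
    have h3T : 0 ≤ 3 * α * ((α + 1) * (α * Real.log α - (α - 1) * Real.log (α - 1))
        - ((α + 1) * Real.log (α + 1) - α * Real.log α)) := by
      linarith [c1, c2, c3, c4, hR]
    nlinarith [h3T, hα0]
  -- cA α in closed form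
  have hcA : cA α = (α + 1) * Real.log 2
      / ((α + 1) * Real.log (α + 1) - α * Real.log α) := by
    rw [cA]
    rw [Real.logb, Real.logb]
    rw [show (α + 1) * (Real.log (α + 1) / Real.log 2) - α * (Real.log α / Real.log 2)
      = ((α + 1) * Real.log (α + 1) - α * Real.log α) / Real.log 2 by ring]
    rw [div_div_eq_mul_div]
  have hcpos : 0 < cA α := by rw [hcA]; positivity
  -- the Gibbs step
  have hSa : (0:ℝ) < (a:ℝ) := by exact_mod_cast ha
  have hSb : (0:ℝ) < (b:ℝ) := by exact_mod_cast hb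
  have hS : (0:ℝ) < (a:ℝ) + b := by linarith
  have hBpos : (0:ℝ) < (B:ℝ) := by exact_mod_cast hB
  have q1 : (α - 1) * (Real.log a + Real.log α - Real.log ((a:ℝ) + b) - Real.log (α - 1))
      ≤ (a:ℝ) * α / ((a:ℝ) + b) - (α - 1) := by
    have hx : (0:ℝ) < (a:ℝ) * α / (((a:ℝ) + b) * (α - 1)) := by positivity
    have h := Real.log_le_sub_one_of_pos hx
    have hlog : Real.log ((a:ℝ) * α / (((a:ℝ) + b) * (α - 1)))
        = Real.log a + Real.log α - Real.log ((a:ℝ) + b) - Real.log (α - 1) := by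
      rw [Real.log_div (by positivity) (by positivity),
        Real.log_mul (ne_of_gt hSa) (ne_of_gt hα0),
        Real.log_mul (ne_of_gt hS) (ne_of_gt hαm)]
      ring
    rw [hlog] at h
    have h2 := mul_le_mul_of_nonneg_left h hαm.le
    have h3 : (α - 1) * ((a:ℝ) * α / (((a:ℝ) + b) * (α - 1)) - 1)
        = (a:ℝ) * α / ((a:ℝ) + b) - (α - 1) := by field_simp
    linarith
  have q2 : Real.log b + Real.log α - Real.log ((a:ℝ) + b)
      ≤ (b:ℝ) * α / ((a:ℝ) + b) - 1 := by
    have hx : (0:ℝ) < (b:ℝ) * α / ((a:ℝ) + b) := by positivity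
    have h := Real.log_le_sub_one_of_pos hx
    have hlog : Real.log ((b:ℝ) * α / ((a:ℝ) + b))
        = Real.log b + Real.log α - Real.log ((a:ℝ) + b) := by
      rw [Real.log_div (by positivity) (ne_of_gt hS),
        Real.log_mul (ne_of_gt hSb) (ne_of_gt hα0)]
    rw [hlog] at h
    linarith
  have hsumB : (B:ℝ) * ((a:ℝ) * α / ((a:ℝ) + b)) + (B:ℝ) * ((b:ℝ) * α / ((a:ℝ) + b))
      = (B:ℝ) * α := by field_simp
  have hgibbs : (B:ℝ) * (α * Real.log α - (α - 1) * Real.log (α - 1))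
      ≤ (α - 1) * (B:ℝ) * (Real.log ((a:ℝ) + b) - Real.log a)
        + (B:ℝ) * (Real.log ((a:ℝ) + b) - Real.log b) := by
    have hq1B := mul_le_mul_of_nonneg_left q1 hBpos.le
    have hq2B := mul_le_mul_of_nonneg_left q2 hBpos.le
    nlinarith [hq1B, hq2B, hsumB]
  have hmono : Real.log a ≤ Real.log ((a:ℝ) + b) := Real.log_le_log hSa (by linarith)
  have hE : (B:ℝ) * (α * Real.log α - (α - 1) * Real.log (α - 1))
      ≤ (A:ℝ) * (Real.log ((a:ℝ) + b) - Real.log a)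
        + (B:ℝ) * (Real.log ((a:ℝ) + b) - Real.log b) := by
    have h2 := mul_le_mul_of_nonneg_right h1
      (show 0 ≤ Real.log ((a:ℝ) + b) - Real.log a by linarith)
    linarith
  -- combine
  have hkey : (B:ℝ) * Real.log 2
      ≤ cA α * ((A:ℝ) * (Real.log ((a:ℝ) + b) - Real.log a)
        + (B:ℝ) * (Real.log ((a:ℝ) + b) - Real.log b)) := by
    have step1 := mul_le_mul_of_nonneg_left hE hcpos.le
    have step2 : (B:ℝ) * Real.log 2
        ≤ cA α * ((B:ℝ) * (α * Real.log α - (α - 1) * Real.log (α - 1))) := by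
      rw [hcA, div_mul_eq_mul_div, le_div_iff₀ hD]
      have := mul_le_mul_of_nonneg_left hstar
        (by positivity : (0:ℝ) ≤ (B:ℝ) * Real.log 2)
      nlinarith [this]
    linarith
  rw [← sub_nonneg]
  have hiden : ((A:ℝ) + B) * (1 + cA α * logb 2 ((a:ℝ) + b))
      - ((A:ℝ) * cA α * logb 2 a + (B:ℝ) * (1 + cA α * logb 2 b) + A + B)
      = (cA α * ((A:ℝ) * (Real.log ((a:ℝ) + b) - Real.log a)
        + (B:ℝ) * (Real.log ((a:ℝ) + b) - Real.log b)) - (B:ℝ) * Real.log 2)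
        / Real.log 2 := by
    simp only [Real.logb]
    field_simp
    ring
  rw [hiden]
  exact div_nonneg (by linarith) hl2.le
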